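/- Let d ≥ 2 be an integer, let λ ∈ [0, 1], and set μ = γ_λ. Then μ ∈ [0, 1], v_μ = u_λ, and u_μ = v_λ. -/

import Mathlib

open scoped InnerProductSpace

noncomputable section

/-- The constant `u_ν = (1/√d)·(√(1+(d−1)ν) − √(1−ν))`. -/
def uConst (d : ℕ) (ν : ℝ) : ℝ :=
  (1 / Real.sqrt d) * (Real.sqrt (1 + ((d : ℝ) - 1) * ν) - Real.sqrt (1 - ν))

/-- The constant `v_ν = √(1−ν)`. -/
def vConst (ν : ℝ) : ℝ := Real.sqrt (1 - ν)

/-- The constant `γ_ν = (1/d)·[(d−2)(1−ν) + 2·√(1−ν)·√(1+(d−1)ν)]`. -/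
def gammaConst (d : ℕ) (ν : ℝ) : ℝ :=
  (1 / (d : ℝ)) * (((d : ℝ) - 2) * (1 - ν)
    + 2 * Real.sqrt (1 - ν) * Real.sqrt (1 + ((d : ℝ) - 1) * ν))

theorem gamma_exchanges_u_and_v (d : ℕ) (hd : 2 ≤ d) (lam : ℝ)
    (hlam : lam ∈ Set.Icc (0 : ℝ) 1) :
    gammaConst d lam ∈ Set.Icc (0 : ℝ) 1 ∧
      vConst (gammaConst d lam) = uConst d lam ∧
      uConst d (gammaConst d lam) = vConst lam := by
  obtain ⟨hl0, hl1⟩ := hlam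
  have hd2 : (2 : ℝ) ≤ (d : ℝ) := by exact_mod_cast hd
  have hdpos : (0 : ℝ) < (d : ℝ) := by linarith
  set a := Real.sqrt (1 - lam) with ha
  set b := Real.sqrt (1 + ((d : ℝ) - 1) * lam) with hb
  have h1l : (0 : ℝ) ≤ 1 - lam := by linarith
  have h2l : (0 : ℝ) ≤ 1 + ((d : ℝ) - 1) * lam := by nlinarith
  have ha0 : 0 ≤ a := Real.sqrt_nonneg _
  have hb0 : 0 ≤ b := Real.sqrt_nonneg _
  have ha2 : a ^ 2 = 1 - lam := Real.sq_sqrt h1l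
  have hb2 : b ^ 2 = 1 + ((d : ℝ) - 1) * lam := Real.sq_sqrt h2l
  have hab : a ≤ b := by
    rw [ha, hb]; exact Real.sqrt_le_sqrt (by nlinarith)
  have hsd : (0 : ℝ) < Real.sqrt d := Real.sqrt_pos.mpr hdpos
  have hsd2 : (Real.sqrt d) ^ 2 = (d : ℝ) := Real.sq_sqrt hdpos.le
  have hgamma : gammaConst d lam =
      (1 / (d : ℝ)) * (((d : ℝ) - 2) * (1 - lam) + 2 * a * b) := rfl
  -- key identities
  have key1 : 1 - gammaConst d lam = (b - a) ^ 2 / d := by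
    rw [hgamma]
    field_simp
    nlinarith [ha2, hb2]
  have key2 : 1 + ((d : ℝ) - 1) * gammaConst d lam = (((d : ℝ) - 1) * a + b) ^ 2 / d := by
    rw [hgamma]
    field_simp
    linear_combination (-(((d : ℝ) - 1) ^ 2)) * ha2 - hb2
  have hg0 : 0 ≤ gammaConst d lam := by
    rw [hgamma]
    have : 0 ≤ ((d : ℝ) - 2) * (1 - lam) + 2 * a * b := by nlinarith
    positivity
  have hg1 : gammaConst d lam ≤ 1 := by
    have h : 0 ≤ (b - a) ^ 2 / (d : ℝ) := by positivity
    linarith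
  have hba : 0 ≤ b - a := by linarith
  have hdab : 0 ≤ ((d : ℝ) - 1) * a + b := by nlinarith
  have s1 : Real.sqrt (1 - gammaConst d lam) = (b - a) / Real.sqrt d := by
    rw [key1, Real.sqrt_div (sq_nonneg _), Real.sqrt_sq hba]
  have s2 : Real.sqrt (1 + ((d : ℝ) - 1) * gammaConst d lam)
      = (((d : ℝ) - 1) * a + b) / Real.sqrt d := by
    rw [key2, Real.sqrt_div (sq_nonneg _), Real.sqrt_sq hdab]
  have hmul : Real.sqrt d * Real.sqrt d = (d : ℝ) := Real.mul_self_sqrt hdpos.le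
  refine ⟨⟨hg0, hg1⟩, ?_, ?_⟩
  · rw [vConst, s1, uConst, ← ha, ← hb]
    ring
  · rw [uConst, s1, s2, vConst, ← ha]
    field_simp
    ring_nf
    rw [hsd2]
    ring
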